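/- Let p ∈ [2, ∞) and f(x) = (1/2)‖x − x*‖_p² for fixed x* ∈ ℝⁿ. Then f is (p−1)-smooth on ℝⁿ with respect to the ℓp-norm: for all x, y ∈ ℝⁿ, f(y) ≤ f(x) + ⟨y − x, ∇f(x)⟩ + ((p−1)/2)‖y − x‖_p². -/

import Mathlib

open scoped BigOperators
open Filter Topology

/-- The `ℓp`-norm on `ℝⁿ` (real exponent `p`). -/
noncomputable def pnorm {n : ℕ} (p : ℝ) (x : Fin n → ℝ) : ℝ :=
  (∑ i, |x i| ^ p) ^ (1 / p)

section auxhelpers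

variable {p : ℝ} {n : ℕ}

lemma real_sign_mul_abs (z : ℝ) : Real.sign z * |z| = z := by
  rcases lt_trichotomy z 0 with h | h | h
  · rw [Real.sign_of_neg h, abs_of_neg h]; ring
  · simp [h]
  · rw [Real.sign_of_pos h, abs_of_pos h]; ring

lemma sq_rpow_eq (z : ℝ) (hz : z ≠ 0) (a : ℝ) : ((z^2) : ℝ) ^ a = |z| ^ (2*a) := by
  rw [← sq_abs, ← Real.rpow_natCast |z| 2, ← Real.rpow_mul (abs_nonneg z)]
  norm_num

lemma sign_abs_repr (z : ℝ) : Real.sign z * |z| ^ (p-1) = z * (z^2) ^ ((p-2)/2) := by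
  rcases eq_or_ne z 0 with rfl | hz
  · simp [Real.sign_zero]
  · rw [sq_rpow_eq z hz]
    rw [show (2:ℝ) * ((p-2)/2) = p - 2 by ring]
    have habs : 0 < |z| := abs_pos.2 hz
    have h3 : |z| ^ (p-1) = |z| ^ (1:ℝ) * |z| ^ (p-2) := by
      rw [← Real.rpow_add habs]; congr 1; ring
    rw [h3, Real.rpow_one, ← mul_assoc, real_sign_mul_abs]

lemma abs_rpow_repr (hp : p ≠ 0) (z : ℝ) : |z| ^ p = ((z^2) : ℝ) ^ (p/2) := by
  rcases eq_or_ne z 0 with rfl | hz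
  · rw [abs_zero, Real.zero_rpow hp]
    simp [Real.zero_rpow (by simpa using (div_ne_zero hp (two_ne_zero)) : p/2 ≠ 0)]
  · rw [sq_rpow_eq z hz]; congr 1; ring

lemma abspow_mul_self (z : ℝ) : |z| ^ (p-2) * z = z * ((z^2 : ℝ)) ^ ((p-2)/2) := by
  rcases eq_or_ne z 0 with rfl | hz
  · simp
  · rw [sq_rpow_eq z hz, show (2:ℝ) * ((p-2)/2) = p - 2 by ring, mul_comm]

lemma sq_mul_sq_rpow (hp : p ≠ 0) (z : ℝ) :
    z^2 * ((z^2 : ℝ)) ^ ((p-2)/2) = |z| ^ p := by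
  rcases eq_or_ne z 0 with rfl | hz
  · simp [Real.zero_rpow hp]
  · have hz2 : (0:ℝ) < z^2 := by positivity
    rw [abs_rpow_repr hp z]
    calc z^2 * ((z^2 : ℝ)) ^ ((p-2)/2) = (z^2 : ℝ) ^ (1:ℝ) * (z^2) ^ ((p-2)/2) := by
          rw [Real.rpow_one]
      _ = (z^2 : ℝ) ^ (p/2) := by rw [← Real.rpow_add hz2]; congr 1; ring

lemma hasDerivAt_signpow (hp : 2 ≤ p) (z : ℝ) :
    HasDerivAt (fun w : ℝ => w * ((w^2):ℝ) ^ ((p-2)/2)) ((p-1) * ((z^2):ℝ) ^ ((p-2)/2)) z := by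
  rcases eq_or_ne z 0 with rfl | hz
  · rcases eq_or_lt_of_le hp with hp2 | hp2
    · have hfe : (fun w : ℝ => w * ((w^2):ℝ) ^ ((p-2)/2)) = fun w : ℝ => w := by
        funext w; rw [← hp2]; norm_num
      rw [hfe, ← hp2]
      norm_num
      exact hasDerivAt_id 0
    · have he : (0:ℝ) < (p-2)/2 := by linarith
      have hval : (p-1) * ((((0:ℝ)^2)):ℝ) ^ ((p-2)/2) = 0 := by
        rw [show ((0:ℝ)^2) = (0:ℝ) by norm_num, Real.zero_rpow (ne_of_gt he)]; ring
      rw [hasDerivAt_iff_tendsto_slope, hval]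
      have hcong : ∀ w ∈ (({0}ᶜ : Set ℝ)), ((w^2):ℝ) ^ ((p-2)/2)
          = slope (fun w : ℝ => w * ((w^2):ℝ) ^ ((p-2)/2)) 0 w := by
        intro w hw
        have hw0 : w ≠ 0 := hw
        rw [slope_def_field]
        field_simp
        ring
      refine Tendsto.congr' (eventually_nhdsWithin_of_forall hcong) ?_
      have hc : ContinuousAt (fun w : ℝ => ((w^2):ℝ) ^ ((p-2)/2)) 0 :=
        ContinuousAt.rpow_const ((continuous_pow 2).continuousAt) (Or.inr (le_of_lt he))
      have h2 := (hc.continuousWithinAt (s := ({0}ᶜ : Set ℝ)))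
      unfold ContinuousWithinAt at h2
      have hval0 : (fun w : ℝ => ((w^2):ℝ) ^ ((p-2)/2)) 0 = 0 := by
        simp [Real.zero_rpow (ne_of_gt he)]
      rw [hval0] at h2
      exact h2
  · have hz2 : (0:ℝ) < z^2 := by positivity
    have inner : HasDerivAt (fun w : ℝ => ((w^2):ℝ) ^ ((p-2)/2))
        ((2*z^1) * ((p-2)/2) * (z^2)^((p-2)/2-1)) z := by
      simpa using (hasDerivAt_pow 2 z).rpow_const (Or.inl (ne_of_gt hz2))
    have prod := (hasDerivAt_id z).mul inner
    refine prod.congr_deriv ?_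
    have hsub : (z^2:ℝ)^((p-2)/2-1) = (z^2)^((p-2)/2) / z^2 := by
      rw [Real.rpow_sub hz2, Real.rpow_one]
    rw [hsub, id_eq]
    field_simp
    ring

/-! ### vector-level helpers -/

lemma sum_abs_rpow_nonneg (v : Fin n → ℝ) : 0 ≤ ∑ i, |v i| ^ p :=
  Finset.sum_nonneg fun i _ => Real.rpow_nonneg (abs_nonneg _) _

lemma pnorm_nonneg (v : Fin n → ℝ) : 0 ≤ pnorm p v :=
  Real.rpow_nonneg (sum_abs_rpow_nonneg v) _

lemma pnorm_sq (hp0 : p ≠ 0) (v : Fin n → ℝ) :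
    (pnorm p v)^2 = (∑ i, |v i| ^ p) ^ (2/p) := by
  unfold pnorm
  rw [← Real.rpow_natCast ((∑ i, |v i| ^ p) ^ (1/p)) 2, ← Real.rpow_mul (sum_abs_rpow_nonneg v)]
  congr 1
  push_cast
  ring

lemma pnorm_smul (hp0 : 0 < p) (c : ℝ) (v : Fin n → ℝ) :
    pnorm p (fun i => c * v i) = |c| * pnorm p v := by
  unfold pnorm
  have h1 : ∀ i, |c * v i| ^ p = |c| ^ p * |v i| ^ p := fun i => by
    rw [abs_mul, Real.mul_rpow (abs_nonneg _) (abs_nonneg _)]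
  simp only [h1]
  rw [← Finset.mul_sum, Real.mul_rpow (Real.rpow_nonneg (abs_nonneg c) p) (sum_abs_rpow_nonneg v),
    ← Real.rpow_mul (abs_nonneg c), mul_one_div_cancel (ne_of_gt hp0), Real.rpow_one]

/-! ### derivative bookkeeping -/

noncomputable def Saux (p : ℝ) {n : ℕ} (w h : Fin n → ℝ) (t : ℝ) : ℝ :=
  ∑ i, |w i + t * h i| ^ p

noncomputable def Aaux (p : ℝ) {n : ℕ} (w h : Fin n → ℝ) (t : ℝ) : ℝ :=
  ∑ i, (w i + t * h i) * (((w i + t * h i)^2 : ℝ)) ^ ((p-2)/2) * h i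

noncomputable def Baux (p : ℝ) {n : ℕ} (w h : Fin n → ℝ) (t : ℝ) : ℝ :=
  ∑ i, (((w i + t * h i)^2 : ℝ)) ^ ((p-2)/2) * (h i)^2

lemma hasDerivAt_affine (w h : Fin n → ℝ) (i : Fin n) (t : ℝ) :
    HasDerivAt (fun t : ℝ => w i + t * h i) (h i) t :=
  (hasDerivAt_mul_const (h i)).const_add (w i)

lemma hasDerivAt_Saux (hp : 2 ≤ p) (w h : Fin n → ℝ) (t : ℝ) :
    HasDerivAt (Saux p w h) (p * Aaux p w h t) t := by
  have hp1 : (1:ℝ) < p := by linarith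
  have term : ∀ i : Fin n, HasDerivAt (fun t : ℝ => |w i + t * h i| ^ p)
      ((p * (w i + t * h i) * (((w i + t * h i)^2 : ℝ)) ^ ((p-2)/2)) * h i) t := by
    intro i
    have comp := (hasDerivAt_abs_rpow (w i + t * h i) hp1).comp t (hasDerivAt_affine w h i t)
    refine comp.congr_deriv ?_
    rw [show p * |w i + t*h i| ^ (p-2) * (w i + t*h i)
        = p * (|w i + t*h i| ^ (p-2) * (w i + t*h i)) by ring, abspow_mul_self]
    ring
  have sum := HasDerivAt.fun_sum (fun i (_ : i ∈ Finset.univ) => term i)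
  refine sum.congr_deriv ?_
  rw [Aaux, Finset.mul_sum]
  exact Finset.sum_congr rfl fun i _ => by ring

lemma hasDerivAt_Aaux (hp : 2 ≤ p) (w h : Fin n → ℝ) (t : ℝ) :
    HasDerivAt (Aaux p w h) ((p-1) * Baux p w h t) t := by
  have term : ∀ i : Fin n, HasDerivAt
      (fun t : ℝ => (w i + t * h i) * (((w i + t * h i)^2 : ℝ)) ^ ((p-2)/2) * h i)
      ((((p-1) * (((w i + t * h i)^2 : ℝ)) ^ ((p-2)/2)) * h i) * h i) t := by
    intro i
    exact (((hasDerivAt_signpow hp (w i + t * h i)).comp t (hasDerivAt_affine w h i t)).mul_const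
      (h i))
  have sum := HasDerivAt.fun_sum (fun i (_ : i ∈ Finset.univ) => term i)
  refine sum.congr_deriv ?_
  rw [Baux, Finset.mul_sum]
  exact Finset.sum_congr rfl fun i _ => by ring

noncomputable def Gaux (p : ℝ) {n : ℕ} (w h : Fin n → ℝ) (t : ℝ) : ℝ :=
  2 * ((Saux p w h t) ^ ((2-p)/p) * Aaux p w h t)

noncomputable def Daux (p : ℝ) {n : ℕ} (w h : Fin n → ℝ) (t : ℝ) : ℝ :=
  2 * (((p * Aaux p w h t) * ((2-p)/p) * (Saux p w h t) ^ ((2-p)/p - 1)) * Aaux p w h t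
    + (Saux p w h t) ^ ((2-p)/p) * ((p-1) * Baux p w h t))

lemma hasDerivAt_Gaux (hp : 2 ≤ p) (w h : Fin n → ℝ) (hS : ∀ t, 0 < Saux p w h t) (t : ℝ) :
    HasDerivAt (Gaux p w h) (Daux p w h t) t := by
  have h1 := (((hasDerivAt_Saux hp w h t).rpow_const
    (show Saux p w h t ≠ 0 ∨ (1:ℝ) ≤ (2-p)/p from Or.inl (ne_of_gt (hS t)))).mul
    (hasDerivAt_Aaux hp w h t)).const_mul 2
  exact h1

lemma hasDerivAt_phi (hp : 2 ≤ p) (w h : Fin n → ℝ) (hS : ∀ t, 0 < Saux p w h t) (t : ℝ) :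
    HasDerivAt (fun t => (Saux p w h t) ^ (2/p)) (Gaux p w h t) t := by
  have hp0 : (0:ℝ) < p := by linarith
  have h1 := (hasDerivAt_Saux hp w h t).rpow_const
    (show Saux p w h t ≠ 0 ∨ (1:ℝ) ≤ 2/p from Or.inl (ne_of_gt (hS t)))
  convert h1 using 1
  rw [Gaux, show 2/p - 1 = (2-p)/p by field_simp]
  field_simp

end auxhelpers

section keylemma

lemma key_ineq {n : ℕ} {p : ℝ} (hp : 2 ≤ p) (w h : Fin n → ℝ) :
    (pnorm p (fun i => w i + h i))^2 ≤ (pnorm p w)^2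
      + 2 * (∑ i, h i * ((pnorm p w) ^ (2-p) * (Real.sign (w i) * |w i| ^ (p-1))))
      + (p-1) * (pnorm p h)^2 := by
  have hp0 : (0:ℝ) < p := by linarith
  have hp0' : p ≠ 0 := ne_of_gt hp0
  by_cases hh : ∀ i, h i = 0
  · have h1 : (fun i => w i + h i) = w := funext fun i => by rw [hh i]; ring
    have h2 : ∀ i, h i * ((pnorm p w) ^ (2-p) * (Real.sign (w i) * |w i| ^ (p-1))) = 0 :=
      fun i => by rw [hh i]; ring
    rw [h1]
    simp only [h2, Finset.sum_const_zero, mul_zero, add_zero]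
    have := pnorm_nonneg (p := p) h
    nlinarith [sq_nonneg (pnorm p h)]
  push_neg at hh
  obtain ⟨j, hj⟩ := hh
  have hQspos : 0 < ∑ i, |h i| ^ p :=
    Finset.sum_pos' (fun i _ => Real.rpow_nonneg (abs_nonneg _) _)
      ⟨j, Finset.mem_univ j, Real.rpow_pos_of_pos (abs_pos.2 hj) p⟩
  have hQpos : 0 < pnorm p h := Real.rpow_pos_of_pos hQspos _
  have hQ2 : (pnorm p h)^2 = (∑ i, |h i| ^ p) ^ (2/p) := pnorm_sq hp0' h
  have hQp : (pnorm p h) ^ (p:ℝ) = ∑ i, |h i| ^ p := by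
    unfold pnorm
    rw [← Real.rpow_mul (le_of_lt hQspos), one_div_mul_cancel hp0', Real.rpow_one]
  by_cases hdeg : ∃ t : ℝ, ∀ i, w i + t * h i = 0
  · -- degenerate case : w is on the line spanned by h
    obtain ⟨t₀, ht₀⟩ := hdeg
    have hw : w = fun i => (-t₀) * h i := funext fun i => by have := ht₀ i; linarith
    have hwh : (fun i => w i + h i) = (fun i => (1 - t₀) * h i) :=
      funext fun i => by rw [hw]; ring
    rw [hwh, hw, pnorm_smul hp0, pnorm_smul hp0]
    rcases eq_or_ne t₀ 0 with rfl | ht0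
    · have hsum : ∀ i, h i * ((|(-0 : ℝ)| * pnorm p h) ^ (2-p)
          * (Real.sign ((-(0:ℝ)) * h i) * |(-(0:ℝ)) * h i| ^ (p-1))) = 0 := by
        intro i
        simp [Real.sign_zero]
      simp only [hsum, Finset.sum_const_zero, mul_zero, add_zero]
      have h1 : |(1:ℝ) - 0| = 1 := by norm_num
      have h2 : |(-0:ℝ)| = 0 := by norm_num
      rw [h1, h2, one_mul, zero_mul]
      nlinarith [sq_nonneg (pnorm p h)]
    · -- t₀ ≠ 0
      have habs : 0 < |t₀| := abs_pos.2 ht0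
      have hsum : (∑ i, h i * ((|(-t₀)| * pnorm p h) ^ (2-p)
          * (Real.sign ((-t₀) * h i) * |(-t₀) * h i| ^ (p-1))))
          = -t₀ * (pnorm p h)^2 := by
        have hterm : ∀ i, h i * ((|(-t₀)| * pnorm p h) ^ (2-p)
            * (Real.sign ((-t₀) * h i) * |(-t₀) * h i| ^ (p-1)))
            = ((|t₀| * pnorm p h) ^ (2-p) * (-t₀) * (t₀^2) ^ ((p-2)/2)) * |h i| ^ p := by
          intro i
          rw [sign_abs_repr]
          have hz2 : (((-t₀) * h i)^2 : ℝ) = t₀^2 * (h i)^2 := by ring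
          have hsplit : ((t₀^2 * (h i)^2 : ℝ)) ^ ((p-2)/2)
              = (t₀^2 : ℝ)^((p-2)/2) * ((h i)^2 : ℝ)^((p-2)/2) :=
            Real.mul_rpow (sq_nonneg t₀) (sq_nonneg (h i))
          rw [hz2, hsplit, abs_neg]
          rw [← sq_mul_sq_rpow hp0' (h i)]
          ring
        rw [Finset.sum_congr rfl (fun i _ => hterm i), ← Finset.mul_sum]
        have hc1 : (|t₀| * pnorm p h) ^ (2-p) = |t₀| ^ (2-p) * (pnorm p h) ^ (2-p) :=
          Real.mul_rpow (abs_nonneg _) (pnorm_nonneg h)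
        have hc2 : (t₀^2 : ℝ) ^ ((p-2)/2) = |t₀| ^ (p-2) := by
          rw [sq_rpow_eq t₀ ht0]; congr 1; ring
        have hc3 : |t₀| ^ (2-p) * |t₀| ^ (p-2) = 1 := by
          rw [← Real.rpow_add habs]; norm_num
        have hc4 : (pnorm p h) ^ (2-p) * (∑ i, |h i| ^ p) = (pnorm p h)^2 := by
          rw [← hQp, ← Real.rpow_add hQpos]
          rw [show (2 - p) + p = (2:ℝ) by ring]
          rw [show ((2:ℝ) : ℝ) = ((2:ℕ) : ℝ) by norm_num, Real.rpow_natCast]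
        calc (|t₀| * pnorm p h) ^ (2-p) * (-t₀) * (t₀^2) ^ ((p-2)/2) * ∑ i, |h i| ^ p
            = (-t₀) * ((|t₀| ^ (2-p) * |t₀| ^ (p-2)) * ((pnorm p h) ^ (2-p) * ∑ i, |h i| ^ p)) := by
              rw [hc1, hc2]; ring
          _ = -t₀ * (pnorm p h)^2 := by rw [hc3, hc4, one_mul]
      rw [hsum]
      have e1 : (|1 - t₀| * pnorm p h)^2 = (1 - t₀)^2 * (pnorm p h)^2 := by
        rw [mul_pow, sq_abs]
      have e2 : (|(-t₀)| * pnorm p h)^2 = t₀^2 * (pnorm p h)^2 := by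
        rw [mul_pow, sq_abs]; ring_nf
      rw [e1, e2]
      nlinarith [sq_nonneg (pnorm p h)]
  · -- main case : S t > 0 for all t
    push_neg at hdeg
    have hSpos : ∀ t, 0 < Saux p w h t := by
      intro t
      obtain ⟨i, hi⟩ := hdeg t
      exact Finset.sum_pos' (fun i _ => Real.rpow_nonneg (abs_nonneg _) _)
        ⟨i, Finset.mem_univ i, Real.rpow_pos_of_pos (abs_pos.2 hi) p⟩
    have hp1 : (1:ℝ) < p := by linarith
    -- Hölder bound
    have holder : ∀ t, (Saux p w h t) ^ ((2-p)/p) * Baux p w h t ≤ (pnorm p h)^2 := by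
      intro t
      rcases eq_or_lt_of_le hp with hp2 | hp2
      · -- p = 2
        subst hp2
        have hB : Baux 2 w h t = ∑ i, (h i)^2 := by
          unfold Baux
          apply Finset.sum_congr rfl
          intro i _
          norm_num
        have hexp : ((2:ℝ) - 2)/2 = 0 := by norm_num
        rw [hexp, Real.rpow_zero, one_mul, hB]
        have hQ : (pnorm 2 h)^2 = ∑ i, (h i)^2 := by
          rw [pnorm_sq (by norm_num : (2:ℝ) ≠ 0) h,
            show (2:ℝ)/2 = (1:ℝ) by norm_num, Real.rpow_one]
          apply Finset.sum_congr rfl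
          intro i _
          rw [show ((2:ℝ):ℝ) = ((2:ℕ):ℝ) by norm_num, Real.rpow_natCast, sq_abs]
        rw [hQ]
      · -- p > 2
        have hps : (0:ℝ) < p - 2 := by linarith
        have hpq : Real.HolderConjugate (p/(p-2)) (p/2) := by
          refine Real.holderConjugate_iff.mpr ⟨?_, ?_⟩
          · rw [lt_div_iff₀ hps]; linarith
          · rw [inv_div, inv_div, ← add_div,
              show p - 2 + 2 = p by ring, div_self hp0']
        have hold := Real.inner_le_Lp_mul_Lq_of_nonneg (s := Finset.univ) hpq
          (f := fun i => (((w i + t*h i)^2 : ℝ)) ^ ((p-2)/2)) (g := fun i => (h i)^2)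
          (fun i _ => Real.rpow_nonneg (sq_nonneg _) _) (fun i _ => sq_nonneg _)
        have hfi : ∀ i : Fin n, ((((w i + t*h i)^2 : ℝ)) ^ ((p-2)/2)) ^ (p/(p-2))
            = |w i + t*h i| ^ p := by
          intro i
          rw [← Real.rpow_mul (sq_nonneg _),
            show (p-2)/2 * (p/(p-2)) = p/2 by field_simp]
          exact (abs_rpow_repr hp0' _).symm
        have hgi : ∀ i : Fin n, (((h i)^2 : ℝ)) ^ (p/2) = |h i| ^ p := fun i =>
          (abs_rpow_repr hp0' _).symm
        have hBle : Baux p w h t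
            ≤ (Saux p w h t) ^ ((p-2)/p) * (∑ i, |h i| ^ p) ^ (2/p) := by
          have e1 : (1:ℝ)/(p/(p-2)) = (p-2)/p := one_div_div _ _
          have e2 : (1:ℝ)/(p/2) = 2/p := one_div_div _ _
          calc Baux p w h t = ∑ i, (((w i + t*h i)^2 : ℝ)) ^ ((p-2)/2) * (h i)^2 := rfl
            _ ≤ (∑ i, ((((w i + t*h i)^2 : ℝ)) ^ ((p-2)/2)) ^ (p/(p-2))) ^ ((1:ℝ)/(p/(p-2)))
                * (∑ i, (((h i)^2 : ℝ)) ^ (p/2)) ^ ((1:ℝ)/(p/2)) := hold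
            _ = (Saux p w h t) ^ ((p-2)/p) * (∑ i, |h i| ^ p) ^ (2/p) := by
                rw [e1, e2]
                congr 2
                · exact Finset.sum_congr rfl fun i _ => hfi i
                · exact Finset.sum_congr rfl fun i _ => hgi i
        have hXnn : (0:ℝ) ≤ (Saux p w h t) ^ ((2-p)/p) :=
          le_of_lt (Real.rpow_pos_of_pos (hSpos t) _)
        calc (Saux p w h t) ^ ((2-p)/p) * Baux p w h t
            ≤ (Saux p w h t) ^ ((2-p)/p)
              * ((Saux p w h t) ^ ((p-2)/p) * (∑ i, |h i| ^ p) ^ (2/p)) :=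
              mul_le_mul_of_nonneg_left hBle hXnn
          _ = (pnorm p h)^2 := by
              rw [← mul_assoc, ← Real.rpow_add (hSpos t),
                show (2-p)/p + (p-2)/p = 0 by ring, Real.rpow_zero, one_mul, hQ2]
    -- bound on the derivative of Gaux
    have hDle : ∀ t, Daux p w h t ≤ 2*(p-1)*(pnorm p h)^2 := by
      intro t
      have hX : (0:ℝ) < (Saux p w h t) ^ ((2-p)/p - 1) := Real.rpow_pos_of_pos (hSpos t) _
      have hT1 : ((p * Aaux p w h t) * ((2-p)/p) * (Saux p w h t) ^ ((2-p)/p - 1))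
          * Aaux p w h t ≤ 0 := by
        have heq : ((p * Aaux p w h t) * ((2-p)/p) * (Saux p w h t) ^ ((2-p)/p - 1))
            * Aaux p w h t
            = (2-p) * ((Saux p w h t) ^ ((2-p)/p - 1) * (Aaux p w h t)^2) := by
          field_simp
        rw [heq]
        apply mul_nonpos_of_nonpos_of_nonneg (by linarith)
        positivity
      have hT2 : (Saux p w h t) ^ ((2-p)/p) * ((p-1) * Baux p w h t)
          ≤ (p-1) * (pnorm p h)^2 := by
        have h1 : (Saux p w h t) ^ ((2-p)/p) * ((p-1) * Baux p w h t)
            = (p-1) * ((Saux p w h t) ^ ((2-p)/p) * Baux p w h t) := by ring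
        rw [h1]
        exact mul_le_mul_of_nonneg_left (holder t) (by linarith)
      rw [Daux]
      linarith
    -- monotonicity: G t ≤ G 0 + C t for t ≥ 0
    have hk : ∀ t : ℝ, HasDerivAt (fun t => 2*(p-1)*(pnorm p h)^2 * t - Gaux p w h t)
        (2*(p-1)*(pnorm p h)^2 - Daux p w h t) t := by
      intro t
      have h1 : HasDerivAt (fun t : ℝ => 2*(p-1)*(pnorm p h)^2 * t)
          (2*(p-1)*(pnorm p h)^2) t := by
        simpa using (hasDerivAt_id t).const_mul (2*(p-1)*(pnorm p h)^2)
      exact h1.sub (hasDerivAt_Gaux hp w h hSpos t)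
    have hmono : Monotone (fun t => 2*(p-1)*(pnorm p h)^2 * t - Gaux p w h t) :=
      monotone_of_deriv_nonneg (fun t => (hk t).differentiableAt)
        (fun t => by rw [(hk t).deriv]; linarith [hDle t])
    have hGle : ∀ t : ℝ, 0 ≤ t → Gaux p w h t ≤ Gaux p w h 0 + 2*(p-1)*(pnorm p h)^2 * t := by
      intro t ht
      have h2 : 2*(p-1)*(pnorm p h)^2 * 0 - Gaux p w h 0
          ≤ 2*(p-1)*(pnorm p h)^2 * t - Gaux p w h t := hmono ht
      nlinarith [h2]
    -- the comparison function ψ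
    have hψ : ∀ t : ℝ, HasDerivAt (fun t => (Saux p w h 0) ^ (2/p) + Gaux p w h 0 * t
        + ((p-1)*(pnorm p h)^2) * t^2 - (Saux p w h t)^(2/p))
        (Gaux p w h 0 + 2*(p-1)*(pnorm p h)^2 * t - Gaux p w h t) t := by
      intro t
      have ha : HasDerivAt (fun t : ℝ => (Saux p w h 0) ^ (2/p) + Gaux p w h 0 * t)
          (Gaux p w h 0) t := by
        simpa using ((hasDerivAt_id t).const_mul (Gaux p w h 0)).const_add
          ((Saux p w h 0) ^ (2/p))
      have hb : HasDerivAt (fun t : ℝ => ((p-1)*(pnorm p h)^2) * t^2)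
          (((p-1)*(pnorm p h)^2) * (2*t^1)) t := by
        exact (hasDerivAt_pow 2 t).const_mul ((p-1)*(pnorm p h)^2)
      have hab := ha.add hb
      have h1 := hab.sub (hasDerivAt_phi hp w h hSpos t)
      refine h1.congr_deriv ?_
      ring
    have hψmono : MonotoneOn (fun t => (Saux p w h 0) ^ (2/p) + Gaux p w h 0 * t
        + ((p-1)*(pnorm p h)^2) * t^2 - (Saux p w h t)^(2/p)) (Set.Ici (0:ℝ)) := by
      have hdiff : Differentiable ℝ (fun t => (Saux p w h 0) ^ (2/p) + Gaux p w h 0 * t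
          + ((p-1)*(pnorm p h)^2) * t^2 - (Saux p w h t)^(2/p)) :=
        fun t => (hψ t).differentiableAt
      apply monotoneOn_of_deriv_nonneg (convex_Ici 0) hdiff.continuous.continuousOn
        hdiff.differentiableOn
      intro t ht
      rw [interior_Ici] at ht
      rw [(hψ t).deriv]
      have := hGle t (le_of_lt ht)
      linarith
    have h01 := hψmono (Set.self_mem_Ici) (by norm_num : (1:ℝ) ∈ Set.Ici 0) zero_le_one
    simp only at h01
    -- bridge to the statement
    have hS1 : (pnorm p (fun i => w i + h i))^2 = (Saux p w h 1)^(2/p) := by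
      rw [pnorm_sq hp0']
      congr 1
      apply Finset.sum_congr rfl
      intro i _
      norm_num
    have hS0 : (pnorm p w)^2 = (Saux p w h 0)^(2/p) := by
      rw [pnorm_sq hp0']
      congr 1
      apply Finset.sum_congr rfl
      intro i _
      norm_num
    have hS0nn : (0:ℝ) ≤ Saux p w h 0 := le_of_lt (hSpos 0)
    have hpnw : pnorm p w = (Saux p w h 0)^((1:ℝ)/p) := by
      unfold pnorm
      congr 1
      apply Finset.sum_congr rfl
      intro i _
      norm_num
    have hmid : (∑ i, h i * ((pnorm p w) ^ (2-p) * (Real.sign (w i) * |w i| ^ (p-1))))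
        = (Saux p w h 0) ^ ((2-p)/p) * Aaux p w h 0 := by
      have hc : (pnorm p w) ^ (2-p) = (Saux p w h 0) ^ ((2-p)/p) := by
        rw [hpnw, ← Real.rpow_mul hS0nn]
        congr 1
        field_simp
      rw [hc]
      have hA0 : Aaux p w h 0 = ∑ i, w i * (((w i)^2 : ℝ))^((p-2)/2) * h i := by
        unfold Aaux
        apply Finset.sum_congr rfl
        intro i _
        norm_num
      rw [hA0, Finset.mul_sum]
      apply Finset.sum_congr rfl
      intro i _
      rw [sign_abs_repr]
      ring
    -- conclude
    rw [hS1, hS0, hmid]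
    norm_num at h01
    have hG0 : Gaux p w h 0 = 2 * ((Saux p w h 0) ^ ((2-p)/p) * Aaux p w h 0) := rfl
    rw [hG0] at h01
    linarith [h01]

end keylemma

/-- For `p ∈ [2, ∞)`, the function `f(x) = (1/2)‖x − x*‖_p²` is `(p−1)`-smooth on `ℝⁿ`
with respect to the `ℓp`-norm:
`f(y) ≤ f(x) + ⟨y − x, ∇f(x)⟩ + ((p−1)/2)‖y − x‖_p²` for all `x, y`. -/
theorem stmt_3 {n : ℕ} (p : ℝ) (hp : 2 ≤ p) (xs : Fin n → ℝ)
    (f : (Fin n → ℝ) → ℝ)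
    (hf : f = fun x => (1 / 2) * (pnorm p (fun i => x i - xs i)) ^ 2)
    (g : (Fin n → ℝ) → (Fin n → ℝ))
    (hg : ∀ x, g x = fun i => (pnorm p (fun j => x j - xs j)) ^ (2 - p) *
      (Real.sign (x i - xs i) * |x i - xs i| ^ (p - 1))) :
    ∀ x y : Fin n → ℝ,
      f y ≤ f x + (∑ i, (y i - x i) * g x i) +
        (p - 1) / 2 * (pnorm p (fun i => y i - x i)) ^ 2 := by
  intro x y
  have key := key_ineq hp (fun i => x i - xs i) (fun i => y i - x i)
  have hwh : (fun i => (x i - xs i) + (y i - x i)) = fun i => y i - xs i :=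
    funext fun i => by ring
  rw [hwh] at key
  rw [hf, hg]
  simp only
  linarith [key]
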